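/- Let ξ ≤ α be finite measurable partitions of a probability space with a measure-preserving action of a countable sofic group G with sofic approximation sequence Σ. Define on homomorphisms to P({1,…,d}) the pseudometric ρ_ξ(φ,ψ) = max_{A∈ξ} |φ(A) Δ ψ(A)|/d, and let h_{Σ,μ}^{ξ,ε}(α) be defined as h_{Σ,μ}^ξ(α) but with |Hom_μ(α,F,δ,σ_i)|_ξ replaced by the maximal cardinality N_ε of an (ε,ρ_ξ)-separated subset of Hom_μ(α,F,δ,σ_i). Then for every finite partition γ and every κ > 0 there exists ε > 0 such that h_{Σ,μ}^γ(β) ≤ h_{Σ,μ}^{γ,ε}(β) + κ for all finite measurable partitions β refining γ. -/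

import Mathlib

open MeasureTheory Filter Finset Pointwise

section Defs

variable {G : Type*} [Group G] [DecidableEq G]
variable {X : Type*} [MeasurableSpace X] [MulAction G X]

/-- A finite measurable partition of `X`, indexed by `Fin n`. -/
def IsFinPartition {n : ℕ} (P : Fin n → Set X) : Prop :=
  (∀ i, MeasurableSet (P i)) ∧ Pairwise (Function.onFun Disjoint P) ∧ (⋃ i, P i) = Set.univ

/-- `A` refines `P` via the index map `r` (each atom of `A` is contained in an atom of `P`). -/
def PartRefines {X : Type*} {m n : ℕ} (A : Fin m → Set X) (P : Fin n → Set X)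
    (r : Fin m → Fin n) : Prop :=
  ∀ i, A i ⊆ P (r i)

/-- The uniform probability measure `ζ` of a subset of `{1,…,d}`. -/
noncomputable def unif {d : ℕ} (S : Set (Fin d)) : ℝ := S.ncard / d

/-- The cell `⋂_{s∈F} s A_{f(s)}` of the join partition `α_F`. -/
def cellF {m : ℕ} (A : Fin m → Set X) (F : Finset G) (f : {s // s ∈ F} → Fin m) : Set X :=
  ⋂ s : {s // s ∈ F}, (s : G) • A (f s)

/-- Given the values `φ f` of a homomorphism on the cells of `α_F` (indexed by functions
`G → Fin m`, depending only on the restriction to `F`), the image `φ(s A_i)`. -/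
def sBlock {m d : ℕ} (φ : (G → Fin m) → Set (Fin d)) (s : G) (i : Fin m) : Set (Fin d) :=
  ⋃ f ∈ {f : G → Fin m | f s = i}, φ f

/-- The image under `φ` of the cell of `α_F` determined by `f : F → Fin m`. -/
def cellBlock {m d : ℕ} (φ : (G → Fin m) → Set (Fin d)) (F : Finset G)
    (f : {s // s ∈ F} → Fin m) : Set (Fin d) :=
  ⋃ g ∈ {g : G → Fin m | ∀ s : {s // s ∈ F}, g (s : G) = f s}, φ g

/-- `φ ∈ Hom_μ(α, F, δ, σ)`: `φ` is (the atom data of) a Boolean algebra homomorphism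
`Σ(α_F) → P({1,…,d})` which is approximately equivariant and approximately
measure-preserving to within `δ`. -/
def IsHom (μ : Measure X) {m : ℕ} (A : Fin m → Set X) (F : Finset G) (δ : ℝ)
    {d : ℕ} (σ : G → Equiv.Perm (Fin d)) (φ : (G → Fin m) → Set (Fin d)) : Prop :=
  (∀ f g : G → Fin m, (∀ s ∈ F, f s = g s) → φ f = φ g) ∧
  (∀ f g : G → Fin m, (∃ s ∈ F, f s ≠ g s) → Disjoint (φ f) (φ g)) ∧
  (⋃ f, φ f) = Set.univ ∧
  (∀ s ∈ F, ∑ i : Fin m,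
      unif (symmDiff ((σ s) '' sBlock φ 1 i) (sBlock φ s i)) < δ) ∧
  (∑ f : {s // s ∈ F} → Fin m,
      |unif (cellBlock φ F f) - (μ (cellF A F f)).toReal| < δ)

/-- The restriction of `φ` to the coarser partition `ξ`, along the refinement map `r`. -/
def restrictHom {m n d : ℕ} (r : Fin m → Fin n) (φ : (G → Fin m) → Set (Fin d)) :
    Fin n → Set (Fin d) :=
  fun j => ⋃ f ∈ {f : G → Fin m | r (f 1) = j}, φ f

/-- `|Hom_μ(α,F,δ,σ)|_ξ`: the number of restrictions to `ξ` of elements of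
`Hom_μ(α,F,δ,σ)`. -/
noncomputable def homCount (μ : Measure X) {m n : ℕ} (A : Fin m → Set X) (r : Fin m → Fin n)
    (F : Finset G) (δ : ℝ) {d : ℕ} (σ : G → Equiv.Perm (Fin d)) : ℕ :=
  (restrictHom r '' {φ | IsHom μ A F δ σ φ}).ncard

/-- `h_{Σ,μ}^ξ(α,F,δ)`. -/
noncomputable def hFδ (μ : Measure X) {m n : ℕ} (A : Fin m → Set X) (r : Fin m → Fin n)
    (F : Finset G) (δ : ℝ) (d : ℕ → ℕ) (σ : ∀ i, G → Equiv.Perm (Fin (d i))) : ℝ :=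
  limsup (fun i => Real.log (homCount μ A r F δ (σ i)) / d i) atTop

/-- `h_{Σ,μ}^ξ(α) = inf_F inf_δ h_{Σ,μ}^ξ(α,F,δ)`, the infimum over nonempty finite
`F ⊆ G` (containing the identity, so that `α ⊆ Σ(α_F)`) and `δ > 0`. -/
noncomputable def hPartLoc (μ : Measure X) {m n : ℕ} (A : Fin m → Set X) (r : Fin m → Fin n)
    (d : ℕ → ℕ) (σ : ∀ i, G → Equiv.Perm (Fin (d i))) : ℝ :=
  sInf { x | ∃ (F : Finset G) (δ : ℝ), (1 : G) ∈ F ∧ 0 < δ ∧ x = hFδ μ A r F δ d σ }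

/-- `h_{Σ,μ}^ξ(S)`: the infimum over finite partitions `α ⊆ S` refining `ξ`. -/
noncomputable def hXi (μ : Measure X) (S : Set (Set X)) {n : ℕ} (P : Fin n → Set X)
    (d : ℕ → ℕ) (σ : ∀ i, G → Equiv.Perm (Fin (d i))) : ℝ :=
  sInf { x | ∃ (m : ℕ) (A : Fin m → Set X) (r : Fin m → Fin n),
    IsFinPartition A ∧ (∀ i, A i ∈ S) ∧ PartRefines A P r ∧
    x = hPartLoc μ A r d σ }

/-- `h_{Σ,μ}(S)`: the supremum over finite partitions `ξ ⊆ S` of `h_{Σ,μ}^ξ(S)`. -/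
noncomputable def hAlg (μ : Measure X) (S : Set (Set X))
    (d : ℕ → ℕ) (σ : ∀ i, G → Equiv.Perm (Fin (d i))) : ℝ :=
  sSup { x | ∃ (n : ℕ) (P : Fin n → Set X),
    IsFinPartition P ∧ (∀ j, P j ∈ S) ∧ x = hXi μ S P d σ }

/-- `Σ = (σ i : G → Sym(d i))` is a sofic approximation sequence: asymptotically
multiplicative and free. -/
def IsSoficApprox {G : Type*} [Group G] (d : ℕ → ℕ)
    (σ : ∀ i, G → Equiv.Perm (Fin (d i))) : Prop :=
  (∀ s t : G, Tendsto (fun i =>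
      (({k : Fin (d i) | σ i (s * t) k = σ i s (σ i t k)}.ncard : ℝ)) / d i)
      atTop (nhds 1)) ∧
  (∀ s t : G, s ≠ t → Tendsto (fun i =>
      (({k : Fin (d i) | σ i s k ≠ σ i t k}.ncard : ℝ)) / d i)
      atTop (nhds 1))

/-- The Shannon entropy `H_μ(P)` of a finite partition. -/
noncomputable def shannonEnt (μ : Measure X) {n : ℕ} (P : Fin n → Set X) : ℝ :=
  -∑ i, (μ (P i)).toReal * Real.log (μ (P i)).toReal

end Defs

/-- The pseudometric `ρ_ξ(φ,ψ) = max_{A ∈ ξ} |φ(A) Δ ψ(A)|/d` on (atom data of)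
homomorphisms, where the values on the atoms of `ξ` are obtained via the refinement
map `r`. -/
noncomputable def rhoXi {G : Type*} [Group G] {m n d : ℕ} (r : Fin m → Fin n)
    (φ ψ : (G → Fin m) → Set (Fin d)) : ℝ :=
  ⨆ j : Fin n, unif (symmDiff (restrictHom r φ j) (restrictHom r ψ j))

/-- `N_ε(S, ρ)`: the maximal cardinality of an `(ε,ρ)`-separated subset of `S`,
i.e. of a subset whose distinct points are at `ρ`-distance at least `ε`. -/
noncomputable def maxSepCard (ε : ℝ) {H : Type*} (S : Set H) (ρ : H → H → ℝ) : ℕ :=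
  sSup {k : ℕ | ∃ Q : Finset H, ↑Q ⊆ S ∧
    (∀ φ ∈ Q, ∀ ψ ∈ Q, φ ≠ ψ → ε ≤ ρ φ ψ) ∧ Q.card = k}

/-- `h_{Σ,μ}^{ξ,ε}(α,F,δ)`, defined like `h_{Σ,μ}^ξ(α,F,δ)` but with
`|Hom_μ(α,F,δ,σ_i)|_ξ` replaced by `N_ε(Hom_μ(α,F,δ,σ_i), ρ_ξ)`. -/
noncomputable def hSepFδ {G : Type*} [Group G] [DecidableEq G]
    {X : Type*} [MeasurableSpace X] [MulAction G X]
    (ε : ℝ) (μ : Measure X) {m n : ℕ} (A : Fin m → Set X) (r : Fin m → Fin n)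
    (F : Finset G) (δ : ℝ) (d : ℕ → ℕ) (σ : ∀ i, G → Equiv.Perm (Fin (d i))) : ℝ :=
  limsup (fun i =>
    Real.log (maxSepCard ε {φ | IsHom μ A F δ (σ i) φ} (rhoXi r)) / d i) atTop

/-- `h_{Σ,μ}^{ξ,ε}(α) = inf_F inf_δ h_{Σ,μ}^{ξ,ε}(α,F,δ)`. -/
noncomputable def hSepLoc {G : Type*} [Group G] [DecidableEq G]
    {X : Type*} [MeasurableSpace X] [MulAction G X]
    (ε : ℝ) (μ : Measure X) {m n : ℕ} (A : Fin m → Set X) (r : Fin m → Fin n)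
    (d : ℕ → ℕ) (σ : ∀ i, G → Equiv.Perm (Fin (d i))) : ℝ :=
  sInf { x | ∃ (F : Finset G) (δ : ℝ), (1 : G) ∈ F ∧ 0 < δ ∧ x = hSepFδ ε μ A r F δ d σ }

open Finset in
lemma card_small_sets_le (d K : ℕ) :
    Set.ncard {B : Set (Fin d) | B.ncard ≤ K} ≤ ∑ k ∈ Finset.range (K+1), Nat.choose d k := by
  classical
  set F0 : Finset (Finset (Fin d)) := Finset.univ.filter (fun T => T.card ≤ K) with hF0
  have hinj : Function.Injective (fun B : Set (Fin d) => (Set.toFinite B).toFinset) := by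
    intro a b h
    have := congrArg (fun T : Finset (Fin d) => (T : Set (Fin d))) h
    simpa [Set.Finite.coe_toFinset] using this
  have h1 : {B : Set (Fin d) | B.ncard ≤ K}.ncard
      = ((fun B : Set (Fin d) => (Set.toFinite B).toFinset) '' {B | B.ncard ≤ K}).ncard :=
    (Set.ncard_image_of_injective _ hinj).symm
  have h2 : ((fun B : Set (Fin d) => (Set.toFinite B).toFinset) '' {B | B.ncard ≤ K}) ⊆ ↑F0 := by
    rintro T ⟨B, hB, rfl⟩
    simp only [hF0, Finset.coe_filter, Set.mem_setOf_eq, Finset.mem_univ, true_and]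
    rwa [← Set.ncard_eq_toFinset_card B]
  have h3 : ((fun B : Set (Fin d) => (Set.toFinite B).toFinset) '' {B | B.ncard ≤ K}).ncard ≤ F0.card := by
    rw [← Set.ncard_coe_finset]
    exact Set.ncard_le_ncard h2 (Finset.finite_toSet _)
  have h4 : F0 ⊆ (Finset.range (K+1)).biUnion (fun k => Finset.powersetCard k Finset.univ) := by
    intro T hT
    simp only [hF0, Finset.mem_filter, Finset.mem_univ, true_and] at hT
    refine Finset.mem_biUnion.2 ⟨T.card, Finset.mem_range.2 (Nat.lt_succ_of_le hT), ?_⟩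
    simp [Finset.mem_powersetCard]
  calc {B : Set (Fin d) | B.ncard ≤ K}.ncard ≤ F0.card := h1 ▸ h3
    _ ≤ ((Finset.range (K+1)).biUnion (fun k => Finset.powersetCard k Finset.univ)).card :=
        Finset.card_le_card h4
    _ ≤ ∑ k ∈ Finset.range (K+1), (Finset.powersetCard k (Finset.univ : Finset (Fin d))).card :=
        Finset.card_biUnion_le
    _ = ∑ k ∈ Finset.range (K+1), Nat.choose d k := by
        simp [Finset.card_powersetCard]

lemma sum_choose_le_pow (d K : ℕ) {x : ℝ} (hx : 0 < x) (hx1 : x ≤ 1) :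
    (∑ k ∈ Finset.range (K+1), (Nat.choose d k : ℝ)) * x ^ K ≤ (1+x)^d := by
  have h1 : (∑ k ∈ Finset.range (K+1), (Nat.choose d k : ℝ)) * x ^ K
      ≤ ∑ k ∈ Finset.range (K+1), (Nat.choose d k : ℝ) * x ^ k := by
    rw [Finset.sum_mul]
    refine Finset.sum_le_sum fun k hk => ?_
    refine mul_le_mul_of_nonneg_left (pow_le_pow_of_le_one hx.le hx1 ?_) (by positivity)
    exact Nat.lt_succ_iff.mp (Finset.mem_range.mp hk)
  have h2 : ∑ k ∈ Finset.range (K+1), (Nat.choose d k : ℝ) * x ^ k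
      ≤ ∑ k ∈ Finset.range (max K d + 1), (Nat.choose d k : ℝ) * x ^ k := by
    refine Finset.sum_le_sum_of_subset_of_nonneg (Finset.range_subset_range.2 (by omega))
      (fun k _ _ => by positivity)
  have h3 : ∑ k ∈ Finset.range (max K d + 1), (Nat.choose d k : ℝ) * x ^ k
      = ∑ k ∈ Finset.range (d + 1), (Nat.choose d k : ℝ) * x ^ k := by
    refine (Finset.sum_subset (Finset.range_subset_range.2 (by omega)) ?_).symm
    intro k hk1 hk
    have hdk : d < k := by
      simp only [Finset.mem_range] at hk
      omega
    simp [Nat.choose_eq_zero_of_lt hdk]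
  have h4 : ∑ k ∈ Finset.range (d + 1), (Nat.choose d k : ℝ) * x ^ k = (1+x)^d := by
    rw [add_comm (1:ℝ) x, add_pow]
    simp [mul_comm]
  linarith
section Rho
variable {G : Type*} [Group G] {m n d : ℕ} (r : Fin m → Fin n)

lemma rho_of_eq {φ ψ : (G → Fin m) → Set (Fin d)}
    (h : restrictHom r φ = restrictHom r ψ) : rhoXi r φ ψ = 0 := by
  unfold rhoXi
  have : ∀ j : Fin n, unif (symmDiff (restrictHom r φ j) (restrictHom r ψ j)) = 0 := by
    intro j; rw [h, symmDiff_self]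
    simp [unif, Set.ncard_empty]
  rcases isEmpty_or_nonempty (Fin n) with he | hne
  · exact Real.iSup_of_isEmpty _
  · simp only [this]; exact ciSup_const

lemma rho_comm (φ ψ : (G → Fin m) → Set (Fin d)) : rhoXi r φ ψ = rhoXi r ψ φ := by
  unfold rhoXi
  congr 1; funext j; rw [symmDiff_comm]

lemma rho_le (φ ψ : (G → Fin m) → Set (Fin d)) (j : Fin n) :
    unif (symmDiff (restrictHom r φ j) (restrictHom r ψ j)) ≤ rhoXi r φ ψ := by
  exact le_ciSup (f := fun j => unif (symmDiff (restrictHom r φ j) (restrictHom r ψ j)))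
    (Set.Finite.bddAbove (Set.finite_range _)) j

end Rho

lemma ncard_biUnion_le' {α β : Type*} [Finite β] (Q : Finset α) (f : α → Set β) :
    (⋃ ψ ∈ Q, f ψ).ncard ≤ ∑ ψ ∈ Q, (f ψ).ncard := by
  classical
  induction Q using Finset.induction with
  | empty => simp
  | @insert a Q ha ih =>
    rw [Finset.sum_insert ha, Finset.set_biUnion_insert]
    exact le_trans (Set.ncard_union_le _ _) (by omega)

section Main
variable {G : Type*} [Group G] {m n d : ℕ} (r : Fin m → Fin n)

abbrev SepSet (ε : ℝ) {H : Type*} (S : Set H) (ρ : H → H → ℝ) : Set ℕ :=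
  {k : ℕ | ∃ Q : Finset H, ↑Q ⊆ S ∧
    (∀ φ ∈ Q, ∀ ψ ∈ Q, φ ≠ ψ → ε ≤ ρ φ ψ) ∧ Q.card = k}

lemma sepSet_le {ε : ℝ} (hε : 0 < ε) (S : Set ((G → Fin m) → Set (Fin d)))
    {k : ℕ} (hk : k ∈ SepSet ε S (rhoXi r)) : k ≤ 2 ^ (d * n) := by
  obtain ⟨Q, hQS, hsep, rfl⟩ := hk
  have hinj : Set.InjOn (restrictHom r) (Q : Set ((G → Fin m) → Set (Fin d))) := by
    intro a ha b hb hab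
    by_contra hne
    have h1 := hsep a (Finset.mem_coe.mp ha) b (Finset.mem_coe.mp hb) hne
    rw [rho_of_eq r hab] at h1
    linarith
  have h2 : Q.card = (restrictHom r '' (Q : Set ((G → Fin m) → Set (Fin d)))).ncard := by
    rw [Set.ncard_image_of_injOn hinj, Set.ncard_coe_finset]
  have h3 : (restrictHom r '' (Q : Set ((G → Fin m) → Set (Fin d)))).ncard ≤ Nat.card (Fin n → Set (Fin d)) := by
    rw [← Set.ncard_univ]
    exact Set.ncard_le_ncard (Set.subset_univ _) (Set.toFinite _)
  have h4 : Nat.card (Fin n → Set (Fin d)) = 2 ^ (d * n) := by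
    rw [Nat.card_fun]
    simp [Nat.card_eq_fintype_card, pow_mul]
  omega

lemma sepSet_nonempty {ε : ℝ} (S : Set ((G → Fin m) → Set (Fin d))) :
    (SepSet ε S (rhoXi r)).Nonempty :=
  ⟨0, ⟨∅, by simp, by simp, by simp⟩⟩

lemma sepSet_bddAbove {ε : ℝ} (hε : 0 < ε) (S : Set ((G → Fin m) → Set (Fin d))) :
    BddAbove (SepSet ε S (rhoXi r)) :=
  ⟨2 ^ (d * n), fun _ hk => sepSet_le r hε S hk⟩

lemma maxSep_le_total {ε : ℝ} (hε : 0 < ε) (S : Set ((G → Fin m) → Set (Fin d))) :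
    maxSepCard ε S (rhoXi r) ≤ 2 ^ (d * n) :=
  csSup_le (sepSet_nonempty r S) (fun _ hk => sepSet_le r hε S hk)

lemma maxSep_one_le {ε : ℝ} (hε : 0 < ε) {S : Set ((G → Fin m) → Set (Fin d))}
    (hS : S.Nonempty) : 1 ≤ maxSepCard ε S (rhoXi r) := by
  obtain ⟨φ, hφ⟩ := hS
  refine le_csSup (sepSet_bddAbove r hε S) ?_
  exact ⟨{φ}, by simpa using hφ, by simp, by simp⟩

lemma restrict_card_le_total (S : Set ((G → Fin m) → Set (Fin d))) :
    (restrictHom r '' S).ncard ≤ 2 ^ (d * n) := by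
  have h3 : (restrictHom r '' S).ncard ≤ Nat.card (Fin n → Set (Fin d)) := by
    rw [← Set.ncard_univ]
    exact Set.ncard_le_ncard (Set.subset_univ _) (Set.toFinite _)
  have h4 : Nat.card (Fin n → Set (Fin d)) = 2 ^ (d * n) := by
    rw [Nat.card_fun]
    simp [Nat.card_eq_fintype_card, pow_mul]
  omega

lemma small_tuples_le (K : ℕ) (w : Fin n → Set (Fin d)) :
    {v : Fin n → Set (Fin d) | ∀ j, (symmDiff (v j) (w j)).ncard ≤ K}.ncard
      ≤ (∑ k ∈ Finset.range (K+1), Nat.choose d k) ^ n := by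
  classical
  set c := ∑ k ∈ Finset.range (K+1), Nat.choose d k
  have hg : Function.Injective (fun (v : Fin n → Set (Fin d)) (j : Fin n) => symmDiff (v j) (w j)) := by
    intro a b h
    funext j
    have := congrFun h j
    exact symmDiff_left_inj.mp this
  rw [← Set.ncard_image_of_injective _ hg]
  have hsub : ((fun (v : Fin n → Set (Fin d)) (j : Fin n) => symmDiff (v j) (w j)) ''
      {v | ∀ j, (symmDiff (v j) (w j)).ncard ≤ K}) ⊆ {v | ∀ j, (v j).ncard ≤ K} := by
    rintro _ ⟨v, hv, rfl⟩ 
    exact hv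
  refine le_trans (Set.ncard_le_ncard hsub (Set.toFinite _)) ?_
  -- now count tuples with all coords small
  have h1 : {v : Fin n → Set (Fin d) | ∀ j, (v j).ncard ≤ K}.ncard
      = Nat.card {v : Fin n → Set (Fin d) // ∀ j, (v j).ncard ≤ K} :=
    (Nat.card_coe_set_eq _).symm
  rw [h1]
  have h2 : Nat.card {v : Fin n → Set (Fin d) // ∀ j, (v j).ncard ≤ K}
      ≤ Nat.card (Fin n → {B : Set (Fin d) // B.ncard ≤ K}) := by
    refine Nat.card_le_card_of_injective
      (fun v j => ⟨v.1 j, v.2 j⟩) ?_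
    intro a b h
    exact Subtype.ext (funext fun j => congrArg Subtype.val (congrFun h j))
  refine le_trans h2 ?_
  rw [Nat.card_fun, Nat.card_eq_fintype_card (α := Fin n), Fintype.card_fin]
  refine Nat.pow_le_pow_left ?_ n
  calc Nat.card {B : Set (Fin d) // B.ncard ≤ K}
      = Set.ncard {B : Set (Fin d) | B.ncard ≤ K} := Nat.card_coe_set_eq _
    _ ≤ c := card_small_sets_le d K

lemma restrict_card_le {ε : ℝ} (hε : 0 < ε) (S : Set ((G → Fin m) → Set (Fin d))) :
    (restrictHom r '' S).ncard ≤
      maxSepCard ε S (rhoXi r) *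
        (∑ k ∈ Finset.range (⌊ε * d⌋₊ + 1), Nat.choose d k) ^ n := by
  classical
  set K := ⌊ε * d⌋₊ with hK
  set c := ∑ k ∈ Finset.range (K+1), Nat.choose d k with hc
  -- a maximal separated set
  obtain ⟨Q, hQS, hsep, hQcard⟩ :=
    Nat.sSup_mem (sepSet_nonempty r (ε := ε) S) (sepSet_bddAbove r hε S)
  have hcov : ∀ φ ∈ S, ∃ ψ ∈ Q, rhoXi r φ ψ < ε := by
    intro φ hφ
    by_contra hcon
    push_neg at hcon
    have hφQ : φ ∉ Q := fun hmem => by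
      have := hcon φ hmem
      rw [rho_of_eq r rfl] at this
      linarith
    have hins : (Q.card + 1) ∈ SepSet ε S (rhoXi r) := by
      refine ⟨insert φ Q, ?_, ?_, by rw [Finset.card_insert_of_notMem hφQ]⟩
      · intro x hx
        rcases Finset.mem_insert.mp (Finset.mem_coe.mp hx) with rfl | hx'
        · exact hφ
        · exact hQS (Finset.mem_coe.mpr hx')
      · intro a ha b hb hab
        rcases Finset.mem_insert.mp ha with rfl | ha' <;>
          rcases Finset.mem_insert.mp hb with rfl | hb'
        · exact absurd rfl hab
        · exact hcon b hb'
        · rw [rho_comm]; exact hcon a ha'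
        · exact hsep a ha' b hb' hab
    have := le_csSup (sepSet_bddAbove r hε S) hins
    rw [hQcard] at this
    omega
  -- covering by neighborhoods
  have hsub : restrictHom r '' S ⊆
      ⋃ ψ ∈ Q, {v : Fin n → Set (Fin d) |
        ∀ j, (symmDiff (v j) (restrictHom r ψ j)).ncard ≤ K} := by
    rintro _ ⟨φ, hφ, rfl⟩
    obtain ⟨ψ, hψQ, hlt⟩ := hcov φ hφ
    refine Set.mem_biUnion hψQ ?_
    intro j
    have h1 : unif (symmDiff (restrictHom r φ j) (restrictHom r ψ j)) < ε :=
      lt_of_le_of_lt (rho_le r φ ψ j) hlt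
    rcases Nat.eq_zero_or_pos d with rfl | hd
    · have : symmDiff (restrictHom r φ j) (restrictHom r ψ j) = (∅ : Set (Fin 0)) :=
        Subsingleton.elim _ _
      simp [this]
    · unfold unif at h1
      rw [div_lt_iff₀ (by exact_mod_cast hd)] at h1
      exact Nat.le_floor (by exact_mod_cast h1.le)
  calc (restrictHom r '' S).ncard
      ≤ (⋃ ψ ∈ Q, {v : Fin n → Set (Fin d) |
          ∀ j, (symmDiff (v j) (restrictHom r ψ j)).ncard ≤ K}).ncard :=
        Set.ncard_le_ncard hsub (Set.toFinite _)
    _ ≤ ∑ ψ ∈ Q, {v : Fin n → Set (Fin d) |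
          ∀ j, (symmDiff (v j) (restrictHom r ψ j)).ncard ≤ K}.ncard :=
        ncard_biUnion_le' Q _
    _ ≤ ∑ _ψ ∈ Q, c ^ n :=
        Finset.sum_le_sum (fun ψ _ => small_tuples_le K (restrictHom r ψ))
    _ = Q.card * c ^ n := by rw [Finset.sum_const, smul_eq_mul]
    _ = maxSepCard ε S (rhoXi r) * c ^ n := by rw [hQcard]; rfl


lemma log_count_le {ε : ℝ} (hε : 0 < ε) (hε1 : ε ≤ 1)
    (S : Set ((G → Fin m) → Set (Fin d))) :
    Real.log (restrictHom r '' S).ncard ≤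
      Real.log (maxSepCard ε S (rhoXi r)) +
        (n * (Real.log (1+ε) + ε * Real.log ε⁻¹)) * d := by
  have hlog1 : 0 ≤ Real.log (1+ε) := Real.log_nonneg (by linarith)
  have hloginv : 0 ≤ Real.log ε⁻¹ :=
    Real.log_nonneg (by rw [le_inv_comm₀ one_pos hε]; simpa using hε1)
  have hRHS2 : 0 ≤ (n * (Real.log (1+ε) + ε * Real.log ε⁻¹)) * d := by positivity
  rcases Nat.eq_zero_or_pos (restrictHom r '' S).ncard with h0 | hpos
  · rw [h0]
    simpa using add_nonneg (Real.log_natCast_nonneg _) hRHS2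
  · have hSne : S.Nonempty := by
      by_contra hS
      rw [Set.not_nonempty_iff_eq_empty] at hS
      simp [hS] at hpos
    set K := ⌊ε * d⌋₊ with hK
    set c := ∑ k ∈ Finset.range (K+1), Nat.choose d k with hc
    set N := maxSepCard ε S (rhoXi r) with hN
    have hN1 : 1 ≤ N := maxSep_one_le r hε hSne
    have hc1 : 1 ≤ c := by
      rw [hc]
      calc 1 = Nat.choose d 0 := (Nat.choose_zero_right d).symm
        _ ≤ _ := Finset.single_le_sum (f := fun k => Nat.choose d k)
            (fun k _ => Nat.zero_le _) (Finset.mem_range.mpr (Nat.succ_pos K))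
    have hmain : (restrictHom r '' S).ncard ≤ N * c ^ n := restrict_card_le r hε S
    have h1 : Real.log (restrictHom r '' S).ncard ≤ Real.log (N * c ^ n : ℕ) := by
      refine Real.log_le_log (by exact_mod_cast hpos) (by exact_mod_cast hmain)
    have h2 : Real.log (N * c ^ n : ℕ) = Real.log N + n * Real.log c := by
      push_cast
      rw [Real.log_mul (by positivity) (by positivity), Real.log_pow]
    have h3 : Real.log c ≤ d * Real.log (1+ε) + K * Real.log ε⁻¹ := by
      have hch : (c : ℝ) * ε ^ K ≤ (1+ε)^d := by
        have := sum_choose_le_pow d K hε hε1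
        rw [hc]
        push_cast
        convert this using 2
      have h4 : Real.log ((c : ℝ) * ε ^ K) ≤ Real.log ((1+ε)^d) :=
        Real.log_le_log (by positivity) hch
      rw [Real.log_mul (by positivity) (by positivity), Real.log_pow,
        Real.log_pow] at h4
      rw [Real.log_inv]
      have : (c:ℝ) ≥ 1 := by exact_mod_cast hc1
      nlinarith
    have hKd : (K : ℝ) ≤ ε * d := Nat.floor_le (by positivity)
    have h5 : (K : ℝ) * Real.log ε⁻¹ ≤ ε * d * Real.log ε⁻¹ :=
      mul_le_mul_of_nonneg_right hKd hloginv
    have h6 : (n : ℝ) * Real.log c ≤ (n * (Real.log (1+ε) + ε * Real.log ε⁻¹)) * d := by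
      have : Real.log c ≤ (Real.log (1+ε) + ε * Real.log ε⁻¹) * d := by nlinarith
      calc (n:ℝ) * Real.log c ≤ n * ((Real.log (1+ε) + ε * Real.log ε⁻¹) * d) :=
            mul_le_mul_of_nonneg_left this (Nat.cast_nonneg n)
        _ = (n * (Real.log (1+ε) + ε * Real.log ε⁻¹)) * d := by ring
    calc Real.log (restrictHom r '' S).ncard ≤ Real.log N + n * Real.log c := h1.trans_eq h2
      _ ≤ Real.log N + (n * (Real.log (1+ε) + ε * Real.log ε⁻¹)) * d := by linarith

end Main


section Glue
open Filter

lemma log_nat_mono {a b : ℕ} (h : a ≤ b) : Real.log a ≤ Real.log b := by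
  rcases Nat.eq_zero_or_pos a with rfl | ha
  · simpa using Real.log_natCast_nonneg b
  · exact Real.log_le_log (by exact_mod_cast ha) (by exact_mod_cast h)

end Glue

/-- Lemma 2.5.  Let `γ` be a finite measurable partition and `κ > 0`.
Then there is `ε > 0` such that `h_{Σ,μ}^γ(β) ≤ h_{Σ,μ}^{γ,ε}(β) + κ` for all finite
measurable partitions `β` refining `γ`. -/
theorem stmt14 {G : Type*} [Group G] [Countable G] [DecidableEq G]
    {X : Type*} [MeasurableSpace X] [MulAction G X]
    (μ : Measure X) [IsProbabilityMeasure μ]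
    (hact : ∀ g : G, MeasurePreserving (fun x : X => g • x) μ μ)
    (dseq : ℕ → ℕ) (σ : ∀ i, G → Equiv.Perm (Fin (dseq i)))
    (hσ : IsSoficApprox dseq σ)
    {n : ℕ} (P : Fin n → Set X) (hP : IsFinPartition P) (κ : ℝ) (hκ : 0 < κ) :
    ∃ ε > 0, ∀ {m : ℕ} (A : Fin m → Set X) (r : Fin m → Fin n),
      IsFinPartition A → PartRefines A P r →
      hPartLoc μ A r dseq σ ≤ hSepLoc ε μ A r dseq σ + κ := by
  classical
  set ε : ℝ := min 1 ((κ / (3*(n+1)))^2) with hεdef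
  have hε : 0 < ε := lt_min one_pos (by positivity)
  have hε1 : ε ≤ 1 := min_le_left _ _
  have hsq : Real.sqrt ε ≤ κ / (3*(n+1)) := by
    calc Real.sqrt ε ≤ Real.sqrt ((κ / (3*(n+1)))^2) := Real.sqrt_le_sqrt (min_le_right _ _)
      _ = κ / (3*(n+1)) := Real.sqrt_sq (by positivity)
  have hκ' : (n : ℝ) * (Real.log (1+ε) + ε * Real.log ε⁻¹) ≤ κ := by
    set t := Real.sqrt ε with ht
    have ht0 : 0 < t := Real.sqrt_pos.mpr hε
    have ht2 : t^2 = ε := Real.sq_sqrt hε.le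
    have ht1 : t ≤ 1 := by nlinarith [Real.sqrt_nonneg ε]
    have hlog1 : Real.log (1+ε) ≤ ε := by
      have := Real.log_le_sub_one_of_pos (show (0:ℝ) < 1+ε by linarith)
      linarith
    have hlog2 : Real.log ε⁻¹ ≤ 2 * t⁻¹ := by
      have hinv : ε⁻¹ = (t⁻¹)^(2:ℕ) := by rw [← ht2, ← inv_pow]
      rw [hinv, Real.log_pow]
      have h1 := Real.log_le_sub_one_of_pos (inv_pos.mpr ht0)
      push_cast
      nlinarith [inv_pos.mpr ht0]
    have heps : ε * Real.log ε⁻¹ ≤ 2 * t := by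
      have h0 : 0 ≤ Real.log ε⁻¹ := Real.log_nonneg (by
        rw [le_inv_comm₀ one_pos hε]; simpa using hε1)
      have h1 : ε * Real.log ε⁻¹ ≤ ε * (2 * t⁻¹) := mul_le_mul_of_nonneg_left hlog2 hε.le
      have h2 : ε * (2 * t⁻¹) = 2 * t := by
        rw [← ht2]; field_simp
      linarith
    have hεt : ε ≤ t := by nlinarith
    have h3 : 3 * ((n:ℝ)+1) * t ≤ κ := by
      rw [div_eq_inv_mul] at hsq
      have h30 : (0:ℝ) < 3*((n:ℝ)+1) := by positivity
      calc 3*((n:ℝ)+1) * t ≤ 3*((n:ℝ)+1) * (κ / (3*(n+1))) :=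
            mul_le_mul_of_nonneg_left (by rw [div_eq_inv_mul] ; exact hsq) h30.le
        _ = κ := by field_simp
    have hn0 : (0:ℝ) ≤ n := Nat.cast_nonneg n
    nlinarith
  refine ⟨ε, hε, ?_⟩
  intro m A r hA hAP
  have hfub : ∀ (F : Finset G) (δ : ℝ) (i : ℕ),
      Real.log (homCount μ A r F δ (σ i)) / (dseq i : ℝ) ≤ n * Real.log 2 := by
    intro F δ i
    have hlog2 : (0:ℝ) ≤ Real.log 2 := Real.log_nonneg one_le_two
    rcases Nat.eq_zero_or_pos (dseq i) with h0 | hd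
    · have hc0 : ((dseq i : ℕ) : ℝ) = 0 := by rw [h0]; norm_num
      rw [hc0, div_zero]
      positivity
    · have h1 : homCount μ A r F δ (σ i) ≤ 2 ^ (dseq i * n) :=
        restrict_card_le_total r _
      have h2 : Real.log (homCount μ A r F δ (σ i)) ≤ (dseq i * n : ℕ) * Real.log 2 := by
        refine le_trans (log_nat_mono h1) ?_
        rw [show ((2 ^ (dseq i * n) : ℕ) : ℝ) = (2:ℝ) ^ (dseq i * n) by push_cast; ring]
        rw [Real.log_pow]
      have hdpos : (0:ℝ) < dseq i := by exact_mod_cast hd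
      rw [div_le_iff₀ hdpos]
      calc Real.log (homCount μ A r F δ (σ i)) ≤ (dseq i * n : ℕ) * Real.log 2 := h2
        _ = n * Real.log 2 * (dseq i) := by push_cast; ring
  have hgub : ∀ (F : Finset G) (δ : ℝ) (i : ℕ),
      Real.log (maxSepCard ε {φ | IsHom μ A F δ (σ i) φ} (rhoXi r)) / (dseq i : ℝ)
        ≤ n * Real.log 2 := by
    intro F δ i
    have hlog2 : (0:ℝ) ≤ Real.log 2 := Real.log_nonneg one_le_two
    rcases Nat.eq_zero_or_pos (dseq i) with h0 | hd
    · have hc0 : ((dseq i : ℕ) : ℝ) = 0 := by rw [h0]; norm_num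
      rw [hc0, div_zero]
      positivity
    · have h1 : maxSepCard ε {φ | IsHom μ A F δ (σ i) φ} (rhoXi r) ≤ 2 ^ (dseq i * n) :=
        maxSep_le_total r hε _
      have h2 : Real.log (maxSepCard ε {φ | IsHom μ A F δ (σ i) φ} (rhoXi r))
          ≤ (dseq i * n : ℕ) * Real.log 2 := by
        refine le_trans (log_nat_mono h1) ?_
        rw [show ((2 ^ (dseq i * n) : ℕ) : ℝ) = (2:ℝ) ^ (dseq i * n) by push_cast; ring]
        rw [Real.log_pow]
      have hdpos : (0:ℝ) < dseq i := by exact_mod_cast hd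
      rw [div_le_iff₀ hdpos]
      calc Real.log (maxSepCard ε {φ | IsHom μ A F δ (σ i) φ} (rhoXi r))
          ≤ (dseq i * n : ℕ) * Real.log 2 := h2
        _ = n * Real.log 2 * (dseq i) := by push_cast; ring
  have key : ∀ (F : Finset G) (δ : ℝ),
      hFδ μ A r F δ dseq σ ≤ hSepFδ ε μ A r F δ dseq σ + κ := by
    intro F δ
    set f := fun i => Real.log (homCount μ A r F δ (σ i)) / (dseq i : ℝ) with hfdef
    set g := fun i => Real.log (maxSepCard ε {φ | IsHom μ A F δ (σ i) φ} (rhoXi r))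
      / (dseq i : ℝ) with hgdef
    have hf0 : ∀ i, 0 ≤ f i := fun i =>
      div_nonneg (Real.log_natCast_nonneg _) (Nat.cast_nonneg _)
    have hg0 : ∀ i, 0 ≤ g i := fun i =>
      div_nonneg (Real.log_natCast_nonneg _) (Nat.cast_nonneg _)
    have hfg : ∀ i, f i ≤ g i + κ := by
      intro i
      rcases Nat.eq_zero_or_pos (dseq i) with h0 | hd
      · have hc0 : ((dseq i : ℕ) : ℝ) = 0 := by rw [h0]; norm_num
        have hfi : f i = 0 := by rw [hfdef]; simp only []; rw [hc0, div_zero]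
        have hgi : g i = 0 := by rw [hgdef]; simp only []; rw [hc0, div_zero]
        rw [hfi, hgi]; linarith
      · have hdpos : (0:ℝ) < dseq i := by exact_mod_cast hd
        have hlog := log_count_le r hε hε1 {φ | IsHom μ A F δ (σ i) φ}
        have hhc : Real.log (homCount μ A r F δ (σ i)) =
            Real.log (restrictHom r '' {φ | IsHom μ A F δ (σ i) φ}).ncard := rfl
        set κ'' := (n : ℝ) * (Real.log (1+ε) + ε * Real.log ε⁻¹) with hκ''
        have h1 : f i ≤ (Real.log (maxSepCard ε {φ | IsHom μ A F δ (σ i) φ} (rhoXi r))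
            + κ'' * (dseq i)) / (dseq i) := by
          rw [hfdef]
          simp only []
          rw [div_le_div_iff_of_pos_right hdpos, hhc]
          exact hlog
        have h2 : (Real.log (maxSepCard ε {φ | IsHom μ A F δ (σ i) φ} (rhoXi r))
            + κ'' * (dseq i)) / (dseq i) = g i + κ'' := by
          rw [hgdef]
          field_simp
        rw [h2] at h1
        linarith
    have hbddg : IsBoundedUnder (· ≤ ·) atTop (fun i => g i + κ) :=
      isBoundedUnder_of ⟨n * Real.log 2 + κ, fun i => by
        have := hgub F δ i; rw [hgdef]; simp only []; linarith⟩
    have hcobf : IsCoboundedUnder (· ≤ ·) atTop f :=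
      IsBoundedUnder.isCoboundedUnder_le (isBoundedUnder_of ⟨0, fun i => hf0 i⟩)
    have h1 : limsup f atTop ≤ limsup (fun i => g i + κ) atTop :=
      limsup_le_limsup (Eventually.of_forall hfg) hcobf hbddg
    have h2 : limsup (fun i => g i + κ) atTop = limsup g atTop + κ :=
      limsup_add_const atTop g κ
        (isBoundedUnder_of ⟨n * Real.log 2, fun i => hgub F δ i⟩)
        (IsBoundedUnder.isCoboundedUnder_le (isBoundedUnder_of ⟨0, fun i => hg0 i⟩))
    calc hFδ μ A r F δ dseq σ = limsup f atTop := rfl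
      _ ≤ limsup (fun i => g i + κ) atTop := h1
      _ = limsup g atTop + κ := h2
      _ = hSepFδ ε μ A r F δ dseq σ + κ := rfl
  have hlb : ∀ (F : Finset G) (δ : ℝ), 0 ≤ hFδ μ A r F δ dseq σ := by
    intro F δ
    refine le_limsup_of_frequently_le
      (Frequently.of_forall fun i =>
        div_nonneg (Real.log_natCast_nonneg _) (Nat.cast_nonneg _))
      (isBoundedUnder_of ⟨n * Real.log 2, fun i => hfub F δ i⟩)
  have hbdd : BddBelow { x | ∃ (F : Finset G) (δ : ℝ),
      (1 : G) ∈ F ∧ 0 < δ ∧ x = hFδ μ A r F δ dseq σ } := by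
    refine ⟨0, ?_⟩
    rintro x ⟨F, δ, hF, hδ, rfl⟩
    exact hlb F δ
  have hSsne : Set.Nonempty { x | ∃ (F : Finset G) (δ : ℝ),
      (1 : G) ∈ F ∧ 0 < δ ∧ x = hSepFδ ε μ A r F δ dseq σ } :=
    ⟨_, {1}, 1, Finset.mem_singleton_self 1, one_pos, rfl⟩
  unfold hPartLoc hSepLoc
  rw [← sub_le_iff_le_add]
  refine le_csInf hSsne ?_
  rintro y ⟨F, δ, hF, hδ, rfl⟩
  rw [sub_le_iff_le_add]
  exact le_trans (csInf_le hbdd ⟨F, δ, hF, hδ, rfl⟩) (key F δ)
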